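/- Let K = ℚ(√D) with D ≥ 2 squarefree, (β_j)_{j∈ℤ} the ordered sequence of indecomposables with v_jβ_j = β_{j-1} + β_{j+1}, and α = e β_j + f β_{j+1} with e ≥ 1, f ≥ 0. Suppose v_j ≤ e ≤ 2v_j - 1, 0 ≤ f ≤ v_{j+1} - 2, and (e,f) ≠ (2v_j-1, v_{j+1}-2), (v_{j-1}, e) ≠ (2, 2v_j-1), (v_{j-1}, e, f) ≠ (2, 2v_j-2, v_{j+1}-2). Then α has exactly 2 partitions into indecomposable parts, namely e β_j + f β_{j+1} and β_{j-1} + (e - v_j)β_j + (f+1)β_{j+1}. -/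

import Mathlib

noncomputable section

/-- `ω_D`: the standard generator of the ring of integers of `ℚ(√D)`. -/
def omegaD (D : ℕ) : ℝ := if D % 4 = 1 then (1 + Real.sqrt D) / 2 else Real.sqrt D

/-- The Galois conjugate of `ω_D`. -/
def omegaD' (D : ℕ) : ℝ := if D % 4 = 1 then (1 - Real.sqrt D) / 2 else -Real.sqrt D

/-- Elements of `O_K` in coordinates: `(x, y)` represents `x + y·ω_D`. -/
abbrev OK : Type := ℤ × ℤ

/-- First real embedding. -/
def emb1 (D : ℕ) (a : OK) : ℝ := a.1 + a.2 * omegaD D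

/-- Second real embedding (Galois conjugate). -/
def emb2 (D : ℕ) (a : OK) : ℝ := a.1 + a.2 * omegaD' D

/-- Galois conjugation on `O_K`. -/
def conjOK (D : ℕ) (a : OK) : OK := (a.1 + (if D % 4 = 1 then (1 : ℤ) else 0) * a.2, -a.2)

/-- Total positivity. -/
def TotPos (D : ℕ) (a : OK) : Prop := 0 < emb1 D a ∧ 0 < emb2 D a

/-- The field norm. -/
def Nm (D : ℕ) (a : OK) : ℝ := emb1 D a * emb2 D a

/-- Indecomposability: totally positive and not a sum of two totally positive elements. -/
def Indec (D : ℕ) (a : OK) : Prop :=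
  TotPos D a ∧ ¬ ∃ b c : OK, TotPos D b ∧ TotPos D c ∧ a = b + c

/-- Number of partitions of `α` into indecomposable parts (`p_K(α|I)`). -/
def pKI (D : ℕ) (α : OK) : ℕ :=
  Set.ncard {s : Multiset OK | (∀ x ∈ s, Indec D x) ∧ s.sum = α}

/-- Number of partitions of `α` into totally positive parts (`p_K(α)`). -/
def pK (D : ℕ) (α : OK) : ℕ :=
  Set.ncard {s : Multiset OK | (∀ x ∈ s, TotPos D x) ∧ s.sum = α}

/-- Discriminant of `ℚ(√D)`. -/
def disc (D : ℕ) : ℕ := if D % 4 = 1 then D else 4 * D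

/-- The ordered two-sided sequence of indecomposables together with
the coefficients `v j ≥ 2` from the Hejda–Kala relation `v_j β_j = β_{j-1} + β_{j+1}`. -/
structure BetaSeq (D : ℕ) (β : ℤ → OK) (v : ℤ → ℤ) : Prop where
  indec : ∀ j, Indec D (β j)
  surj : ∀ a : OK, Indec D a → ∃ j, β j = a
  mono : StrictMono fun j => emb1 D (β j)
  zero : β 0 = (1, 0)
  conj_eq : ∀ j, β (-j) = conjOK D (β j)
  v_two_le : ∀ j, 2 ≤ v j
  v_symm : ∀ j, v (-j) = v j
  rel : ∀ j, v j • β j = β (j - 1) + β (j + 1)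

/-- The continued fraction data of `ω_D = [⌈u₀/2⌉, \overline{u₁, …, u_s}]` (with `u_s = u_0`),
with tails `γ_0 = ω_D`, `γ_i = [u_i, u_{i+1}, …]` for `i ≥ 1`. -/
structure CFData (D : ℕ) (u : ℕ → ℕ) (γ : ℕ → ℝ) : Prop where
  gamma_zero : γ 0 = omegaD D
  u_zero : (u 0 : ℤ) = 2 * ⌊omegaD D⌋ - (if D % 4 = 1 then 1 else 0)
  head : omegaD D = (⌊omegaD D⌋ : ℝ) + 1 / γ 1
  step : ∀ i, 1 ≤ i → γ i = u i + 1 / γ (i + 1)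
  one_lt : ∀ i, 1 ≤ i → 1 < γ i
  floor_eq : ∀ i, 1 ≤ i → (u i : ℤ) = ⌊γ i⌋
  period : ∃ s, 1 ≤ s ∧ u s = u 0 ∧ ∀ i, 1 ≤ i → u (i + s) = u i

/-- The convergents `α_i = p_i + q_i ξ_D`, indexed by `i ≥ -1`. -/
structure ConvData (D : ℕ) (u : ℕ → ℕ) (a : ℤ → OK) : Prop where
  neg_one : a (-1) = (1, 0)
  zero : a 0 = (⌊omegaD D⌋, 0) + (if D % 4 = 1 then ((-1 : ℤ), (1 : ℤ)) else (0, 1))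
  recur : ∀ i : ℤ, -1 ≤ i → a (i + 2) = (u (i + 2).toNat : ℤ) • a (i + 1) + a i

/-- Semiconvergents `α_{i,r} = α_i + r·α_{i+1}`. -/
def semiconv (a : ℤ → OK) (i r : ℤ) : OK := a i + r • a (i + 1)

section Glue
variable {D : ℕ} {β : ℤ → OK} {v : ℤ → ℤ}

lemma emb1_add (D : ℕ) (x y : OK) : emb1 D (x + y) = emb1 D x + emb1 D y := by
  simp [emb1, Prod.fst_add, Prod.snd_add]; push_cast; ring

lemma emb2_add (D : ℕ) (x y : OK) : emb2 D (x + y) = emb2 D x + emb2 D y := by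
  simp [emb2, Prod.fst_add, Prod.snd_add]; push_cast; ring

lemma emb1_smul (D : ℕ) (z : ℤ) (x : OK) : emb1 D (z • x) = z * emb1 D x := by
  simp [emb1, Prod.smul_fst, Prod.smul_snd, smul_eq_mul]; push_cast; ring

lemma emb2_smul (D : ℕ) (z : ℤ) (x : OK) : emb2 D (z • x) = z * emb2 D x := by
  simp [emb2, Prod.smul_fst, Prod.smul_snd, smul_eq_mul]; push_cast; ring

lemma emb1_sub (D : ℕ) (x y : OK) : emb1 D (x - y) = emb1 D x - emb1 D y := by
  simp [emb1, Prod.fst_sub, Prod.snd_sub]; push_cast; ring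

lemma emb2_sub (D : ℕ) (x y : OK) : emb2 D (x - y) = emb2 D x - emb2 D y := by
  simp [emb2, Prod.fst_sub, Prod.snd_sub]; push_cast; ring

lemma emb1_conj (D : ℕ) (a : OK) : emb1 D (conjOK D a) = emb2 D a := by
  by_cases h : D % 4 = 1 <;>
    simp [emb1, emb2, conjOK, omegaD, omegaD', h] <;> push_cast <;> ring

end Glue

section Beta
variable {D : ℕ} {β : ℤ → OK} {v : ℤ → ℤ}

lemma b_pos (hβ : BetaSeq D β v) (k : ℤ) : 0 < emb1 D (β k) := (hβ.indec k).1.1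
lemma b'_pos (hβ : BetaSeq D β v) (k : ℤ) : 0 < emb2 D (β k) := (hβ.indec k).1.2

lemma emb2_beta (hβ : BetaSeq D β v) (k : ℤ) : emb2 D (β k) = emb1 D (β (-k)) := by
  rw [hβ.conj_eq k, emb1_conj]

lemma beta_inj (hβ : BetaSeq D β v) : Function.Injective β := by
  intro x y h
  by_contra hne
  rcases lt_or_gt_of_ne hne with hlt | hlt
  · exact absurd (congrArg (emb1 D) h) (ne_of_lt (hβ.mono hlt))
  · exact absurd (congrArg (emb1 D) h) (ne_of_gt (hβ.mono hlt))

lemma b_rel (hβ : BetaSeq D β v) (k : ℤ) :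
    (v k : ℝ) * emb1 D (β k) = emb1 D (β (k-1)) + emb1 D (β (k+1)) := by
  have := congrArg (emb1 D) (hβ.rel k)
  rwa [emb1_smul, emb1_add] at this

/-- growth: emb1 (β k) exceeds any bound for k large. -/
lemma b_unbounded (hβ : BetaSeq D β v) (C : ℝ) :
    ∃ N : ℕ, ∀ k : ℤ, (N : ℤ) ≤ k → C < emb1 D (β k) := by
  set b : ℤ → ℝ := fun k => emb1 D (β k) with hb
  have bpos : ∀ k, 0 < b k := fun k => b_pos hβ k
  have hmono : StrictMono b := hβ.mono
  set ε : ℝ := b 1 - b 0 with hε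
  have hε0 : 0 < ε := by
    have : b 0 < b 1 := hmono (by norm_num)
    simp only [hε]; linarith
  have diff : ∀ k : ℤ, b (k+1) - b k ≤ b (k+2) - b (k+1) := by
    intro k
    have h1 := b_rel hβ (k+1)
    rw [show k+1-1 = k from by ring, show k+1+1 = k+2 from by ring] at h1
    have h2 : (2:ℝ) ≤ (v (k+1) : ℝ) := by exact_mod_cast hβ.v_two_le (k+1)
    nlinarith [bpos (k+1)]
  have step : ∀ i : ℕ, ε ≤ b ((i:ℤ)+1) - b (i:ℤ) := by
    intro i
    induction i with
    | zero => norm_num [hε]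
    | succ i ih =>
      have hd := diff (i:ℤ)
      push_cast
      rw [show (i:ℤ)+1+1 = (i:ℤ)+2 from by ring]
      linarith
  have grow : ∀ i : ℕ, b 0 + i * ε ≤ b (i:ℤ) := by
    intro i
    induction i with
    | zero => norm_num
    | succ i ih =>
      have hs := step i
      push_cast
      push_cast at ih
      have hh : b ((i:ℤ)+1) ≥ b (i:ℤ) + ε := by linarith
      nlinarith
  obtain ⟨N, hN⟩ := exists_nat_gt ((C - b 0) / ε)
  refine ⟨N, fun k hk => ?_⟩
  have h1 : b 0 + N * ε ≤ b (N:ℤ) := grow N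
  have h2 : b (N:ℤ) ≤ b k := hmono.monotone hk
  have h3 : (C - b 0) / ε < N := hN
  have h4 : C - b 0 < N * ε := by
    rw [div_lt_iff₀ hε0] at h3; linarith
  linarith

end Beta

section MS
variable {D : ℕ}

lemma emb1_zero (D : ℕ) : emb1 D (0 : OK) = 0 := by simp [emb1]
lemma emb2_zero (D : ℕ) : emb2 D (0 : OK) = 0 := by simp [emb2]

lemma sum_emb_nonneg (D : ℕ) (s : Multiset OK) (h : ∀ x ∈ s, TotPos D x) :
    0 ≤ emb1 D s.sum ∧ 0 ≤ emb2 D s.sum := by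
  induction s using Multiset.induction_on with
  | empty => simp [emb1_zero, emb2_zero]
  | cons a s ih =>
    have ha := h a (Multiset.mem_cons_self a s)
    have ih' := ih (fun x hx => h x (Multiset.mem_cons_of_mem hx))
    rw [Multiset.sum_cons, emb1_add, emb2_add]
    constructor <;> [linarith [ha.1, ih'.1]; linarith [ha.2, ih'.2]]

lemma mem_bound (D : ℕ) (s : Multiset OK) (α x : OK) (h : ∀ y ∈ s, TotPos D y)
    (hs : s.sum = α) (hx : x ∈ s) :
    emb1 D x ≤ emb1 D α ∧ emb2 D x ≤ emb2 D α := by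
  have hrest := sum_emb_nonneg D (s.erase x) (fun y hy => h y (Multiset.mem_of_mem_erase hy))
  have hsum : x + (s.erase x).sum = α := by
    rw [← Multiset.sum_cons, Multiset.cons_erase hx, hs]
  rw [← hsum, emb1_add, emb2_add]
  constructor <;> linarith [hrest.1, hrest.2]

lemma exists_indexMultiset {β : ℤ → OK} {v : ℤ → ℤ} (hβ : BetaSeq D β v)
    (s : Multiset OK) (h : ∀ x ∈ s, Indec D x) :
    ∃ t : Multiset ℤ, s = t.map β := by
  induction s using Multiset.induction_on with
  | empty => exact ⟨0, rfl⟩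
  | cons a s ih =>
    obtain ⟨t, ht⟩ := ih (fun x hx => h x (Multiset.mem_cons_of_mem hx))
    obtain ⟨k, hk⟩ := hβ.surj a (h a (Multiset.mem_cons_self a s))
    exact ⟨k ::ₘ t, by rw [Multiset.map_cons, hk, ht]⟩

lemma map_sum_eq_count_sum (β : ℤ → OK) (t : Multiset ℤ) (I : Finset ℤ)
    (h : ∀ k ∈ t, k ∈ I) :
    (t.map β).sum = ∑ k ∈ I, (t.count k : ℤ) • β k := by
  induction t using Multiset.induction_on with
  | empty => simp
  | cons a t ih =>
    have ha : a ∈ I := h a (Multiset.mem_cons_self a t)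
    have ih' := ih (fun k hk => h k (Multiset.mem_cons_of_mem hk))
    rw [Multiset.map_cons, Multiset.sum_cons, ih']
    have : ∀ k, ((a ::ₘ t).count k : ℤ) • β k
        = (t.count k : ℤ) • β k + (if k = a then β k else 0) := by
      intro k
      rw [Multiset.count_cons]
      split_ifs with hk
      · simp [add_smul]
      · simp
    simp_rw [this]
    rw [Finset.sum_add_distrib, Finset.sum_ite_eq' I a β, if_pos ha]
    abel

lemma cstar_sum (β : ℤ → OK) (I : Finset ℤ) (j e f : ℤ)
    (hj : j ∈ I) (hj1 : j + 1 ∈ I) :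
    ∑ k ∈ I, (if k = j then e else if k = j+1 then f else 0) • β k
      = e • β j + f • β (j+1) := by
  have hne : j ≠ j + 1 := by omega
  have : ∀ k ∈ I, (if k = j then e else if k = j+1 then f else 0) • β k
      = (if k = j then e • β j else 0) + (if k = j+1 then f • β (j+1) else 0) := by
    intro k _
    by_cases h1 : k = j
    · subst h1; rw [if_pos rfl, if_pos rfl, if_neg hne, add_zero]
    · by_cases h2 : k = j + 1
      · subst h2; rw [if_neg h1, if_pos rfl, if_pos rfl, if_neg h1, zero_add]
      · rw [if_neg h1, if_neg h2, if_neg h1, if_neg h2, zero_smul, add_zero]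
  rw [Finset.sum_congr rfl this, Finset.sum_add_distrib,
    Finset.sum_ite_eq' I j (fun _ => e • β j), Finset.sum_ite_eq' I (j+1) (fun _ => f • β (j+1)),
    if_pos hj, if_pos hj1]

end MS

section Kernel
variable {D : ℕ} {β : ℤ → OK} {v : ℤ → ℤ}

def gseq (v d : ℤ → ℤ) (m : ℤ) : ℕ → ℤ
  | 0 => 0
  | 1 => 0
  | (i+2) => d (m + i) + v (m + i) * gseq v d m (i+1) - gseq v d m i

def nfun (v d : ℤ → ℤ) (m : ℤ) (k : ℤ) : ℤ := gseq v d m (k + 1 - m).toNat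

lemma nfun_zero_below (v d : ℤ → ℤ) (m k : ℤ) (hk : k ≤ m) : nfun v d m k = 0 := by
  have h : (k + 1 - m).toNat = 0 ∨ (k + 1 - m).toNat = 1 := by omega
  rcases h with h | h <;> simp [nfun, h, gseq]

lemma nfun_rec (v d : ℤ → ℤ) (m k : ℤ) (hk : m ≤ k) :
    nfun v d m (k+1) = d k + v k * nfun v d m k - nfun v d m (k-1) := by
  set i : ℕ := (k - m).toNat with hi
  have h1 : (k + 1 + 1 - m).toNat = i + 2 := by omega
  have h2 : (k + 1 - m).toNat = i + 1 := by omega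
  have h3 : (k - 1 + 1 - m).toNat = i := by omega
  have h4 : m + (i : ℤ) = k := by omega
  simp only [nfun, h1, h2, h3]
  rw [show gseq v d m (i+2) = d (m+i) + v (m+i) * gseq v d m (i+1) - gseq v d m i from rfl, h4]

lemma nfun_d_eq (v d : ℤ → ℤ) (m : ℤ) (hd0 : ∀ k, k < m → d k = 0) (k : ℤ) :
    d k = nfun v d m (k+1) - v k * nfun v d m k + nfun v d m (k-1) := by
  rcases le_or_gt m k with h | h
  · have := nfun_rec v d m k h
    linarith
  · rw [hd0 k h, nfun_zero_below v d m (k+1) (by omega),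
      nfun_zero_below v d m k (by omega), nfun_zero_below v d m (k-1) (by omega)]
    ring

lemma telescope (hβ : BetaSeq D β v) (d : ℤ → ℤ) (m : ℤ)
    (hd0 : ∀ k, k < m → d k = 0) :
    ∀ K, m ≤ K → ∑ k ∈ Finset.Icc m K, d k • β k
      = nfun v d m (K+1) • β K - nfun v d m K • β (K+1) := by
  have step : ∀ K, m ≤ K →
      (∑ k ∈ Finset.Icc m K, d k • β k
        = nfun v d m (K+1) • β K - nfun v d m K • β (K+1)) →
      ∑ k ∈ Finset.Icc m (K+1), d k • β k
        = nfun v d m (K+2) • β (K+1) - nfun v d m (K+1) • β (K+2) := by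
    intro K hK ih
    have hins : Finset.Icc m (K+1) = insert (K+1) (Finset.Icc m K) := by
      ext x; simp only [Finset.mem_Icc, Finset.mem_insert]; omega
    rw [hins, Finset.sum_insert (by simp [Finset.mem_Icc]), ih]
    have hdk : d (K+1) = nfun v d m (K+2) - v (K+1) * nfun v d m (K+1) + nfun v d m K := by
      have := nfun_d_eq v d m hd0 (K+1)
      rw [show K+1+1 = K+2 from by ring, show K+1-1 = K from by ring] at this
      exact this
    have hrel : v (K+1) • β (K+1) = β K + β (K+2) := by
      have := hβ.rel (K+1)
      rwa [show K+1-1 = K from by ring, show K+1+1 = K+2 from by ring] at this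
    have h2 : (v (K+1) * nfun v d m (K+1)) • β (K+1)
        = nfun v d m (K+1) • β K + nfun v d m (K+1) • β (K+2) := by
      rw [mul_comm, mul_smul, hrel, smul_add]
    rw [hdk, add_smul, sub_smul, h2]
    abel
  have base : ∑ k ∈ Finset.Icc m m, d k • β k
      = nfun v d m (m+1) • β m - nfun v d m m • β (m+1) := by
    rw [Finset.Icc_self, Finset.sum_singleton]
    rw [nfun_rec v d m m le_rfl, nfun_zero_below v d m m le_rfl,
      nfun_zero_below v d m (m-1) (by omega)]
    simp
  have main : ∀ i : ℕ, ∑ k ∈ Finset.Icc m (m + (i:ℤ)), d k • β k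
      = nfun v d m (m+(i:ℤ)+1) • β (m+(i:ℤ)) - nfun v d m (m+(i:ℤ)) • β (m+(i:ℤ)+1) := by
    intro i
    induction i with
    | zero => simpa using base
    | succ i ih =>
      have h1 : (m + ((i:ℕ)+1:ℕ) : ℤ) = (m + (i:ℤ)) + 1 := by push_cast; ring
      rw [h1, show (m + (i:ℤ)) + 1 + 1 = (m+(i:ℤ)) + 2 from by ring]
      exact step (m + (i:ℤ)) (by omega) ih
  intro K hK
  have h1 : m + ((K - m).toNat : ℤ) = K := by omega
  have := main (K - m).toNat
  rwa [h1] at this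

lemma ratio_lemma (hβ : BetaSeq D β v) (K : ℤ) (x y : ℤ)
    (h : x • β K = y • β (K + 1)) : x = 0 ∧ y = 0 := by
  have h1 : (x:ℝ) * emb1 D (β K) = y * emb1 D (β (K+1)) := by
    have := congrArg (emb1 D) h
    rwa [emb1_smul, emb1_smul] at this
  have h2 : (x:ℝ) * emb2 D (β K) = y * emb2 D (β (K+1)) := by
    have := congrArg (emb2 D) h
    rwa [emb2_smul, emb2_smul] at this
  have hb1 : emb1 D (β K) < emb1 D (β (K+1)) := hβ.mono (by omega)
  have hb2 : emb2 D (β (K+1)) < emb2 D (β K) := by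
    rw [emb2_beta hβ, emb2_beta hβ]
    exact hβ.mono (by omega)
  have p1 := b_pos hβ K
  have p2 := b_pos hβ (K+1)
  have p3 := b'_pos hβ K
  have p4 := b'_pos hβ (K+1)
  have hy : (y:ℝ) = 0 := by
    have key : (y:ℝ) * (emb1 D (β (K+1)) * emb2 D (β K) - emb1 D (β K) * emb2 D (β (K+1))) = 0 := by
      nlinarith [h1, h2]
    have hpos : 0 < emb1 D (β (K+1)) * emb2 D (β K) - emb1 D (β K) * emb2 D (β (K+1)) := by
      nlinarith
    rcases mul_eq_zero.mp key with h | h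
    · exact h
    · linarith
  have hy' : y = 0 := by exact_mod_cast hy
  refine ⟨?_, hy'⟩
  rw [hy] at h1
  have : (x:ℝ) = 0 := by
    rcases mul_eq_zero.mp (by linarith [h1] : (x:ℝ) * emb1 D (β K) = 0) with h | h
    · exact h
    · linarith
  exact_mod_cast this

end Kernel

lemma central (a' a b e f p q r p' r' : ℤ)
    (ha' : 2 ≤ a') (ha : 2 ≤ a) (hb : 2 ≤ b)
    (he1 : a ≤ e) (he2 : e ≤ 2*a-1) (hf0 : 0 ≤ f) (hf : f ≤ b - 2)
    (h4 : ¬(e = 2*a-1 ∧ f = b-2))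
    (h5 : ¬(a' = 2 ∧ e = 2*a-1))
    (h6 : ¬(a' = 2 ∧ e = 2*a-2 ∧ f = b-2))
    (hp0 : 0 ≤ p) (hr0 : 0 ≤ r) (hp'0 : 0 ≤ p') (hr'0 : 0 ≤ r')
    (hp' : p' ≤ p) (hr' : r' ≤ r)
    (hp1 : 1 ≤ p → p' ≤ p - 1) (hr1 : 1 ≤ r → r' ≤ r - 1)
    (hq0 : 0 ≤ q)
    (HA : a' * p ≤ p' + q) (HB : b * r - f ≤ q + r') (HC : a * q ≤ p + r + e) :
    q ≤ 1 ∧ p = 0 ∧ r = 0 := by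
  have Pa' : 2*p ≤ a'*p := mul_le_mul_of_nonneg_right ha' hp0
  have Pb : 2*r ≤ b*r := mul_le_mul_of_nonneg_right hb hr0
  have step1 : 1 ≤ p → p + 1 ≤ q := fun hp => by have := hp1 hp; linarith
  have step1' : 1 ≤ p → 3 ≤ a' → 2*p + 1 ≤ q := fun hp h3 => by
    have h := hp1 hp
    have : 3*p ≤ a'*p := mul_le_mul_of_nonneg_right h3 hp0
    linarith
  have step2 : 1 ≤ r → (b-1)*r + 1 - f ≤ q := fun hr => by
    have h := hr1 hr
    have id1 : (b-1)*r = b*r - r := by ring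
    linarith
  have step2b : 1 ≤ r → r + 1 ≤ q := fun hr => by
    have h1 := step2 hr
    have h2 : 1*(r-1) ≤ (b-1)*(r-1) :=
      mul_le_mul_of_nonneg_right (by linarith) (by linarith)
    have id1 : (b-1)*r = (b-1)*(r-1) + (b-1) := by ring
    linarith
  have hq1 : q ≤ 1 := by
    by_contra hq
    push_neg at hq
    have hq2 : 2 ≤ q := hq
    have Paq : a*(q-2) = a*q - 2*a := by ring
    have Paq0 : 0 ≤ a*(q-2) := mul_nonneg (by linarith) (by linarith)
    rcases le_or_gt p 0 with hp | hp
    · have hp : p = 0 := le_antisymm hp hp0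
      rcases le_or_gt r 0 with hr | hr
      · have hr : r = 0 := le_antisymm hr hr0
        rw [hp, hr] at HC
        linarith
      · have hr : 1 ≤ r := hr
        have hrq : r + 1 ≤ q := step2b hr
        have hra : a*(q-2)+1 ≤ r := by rw [hp] at HC; linarith
        have hq2' : q = 2 := by
          have h2 : 1*(q-2) ≤ (a-1)*(q-2) :=
            mul_le_mul_of_nonneg_right (by linarith) (by linarith)
          have id1 : (a-1)*(q-2) = a*(q-2) - (q-2) := by ring
          omega
        rw [hq2'] at hrq
        have hr1' : r = 1 := by omega
        rw [hr1', mul_one] at HB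
        have := hr1 hr
        rw [hr1'] at this
        have hfb : f = b - 2 := by omega
        rw [hq2'] at HC
        have heb : e = 2*a-1 := by omega
        exact h4 ⟨heb, hfb⟩
    · have hp : 1 ≤ p := hp
      have hpq : p + 1 ≤ q := step1 hp
      rcases le_or_gt r 0 with hr | hr
      · have hr : r = 0 := le_antisymm hr hr0
        rw [hr] at HC
        have hpa : a*(q-2)+1 ≤ p := by linarith
        have hq2' : q = 2 := by
          have h2 : 1*(q-2) ≤ (a-1)*(q-2) :=
            mul_le_mul_of_nonneg_right (by linarith) (by linarith)
          have id1 : (a-1)*(q-2) = a*(q-2) - (q-2) := by ring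
          omega
        rw [hq2'] at hpq
        have hpv : p = 1 := by omega
        rw [hpv, mul_one] at HA
        have := hp1 hp
        rw [hpv] at this
        have ha'2 : a' = 2 := by omega
        rw [hpv, hq2'] at HC
        have heb : e = 2*a-1 := by omega
        exact h5 ⟨ha'2, heb⟩
      · have hr : 1 ≤ r := hr
        have hrq : r + 1 ≤ q := step2b hr
        rcases le_or_gt 3 a with ha3 | ha2
        · have hkey : (a-2)*(q-2) ≤ 1 := by
            have id1 : (a-2)*(q-2) = a*q - 2*a - 2*q + 4 := by ring
            linarith
          have hq3 : q ≤ 3 := by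
            by_contra h
            push_neg at h
            have : 1*2 ≤ (a-2)*(q-2) :=
              mul_le_mul (by linarith) (by linarith) (by norm_num) (by linarith)
            linarith
          interval_cases q
          · have hp1' : p = 1 := by omega
            have hr1' : r = 1 := by omega
            rw [hp1', mul_one] at HA
            rw [hr1', mul_one] at HB
            have t1 := hp1 hp; rw [hp1'] at t1
            have t2 := hr1 hr; rw [hr1'] at t2
            have ha'2 : a' = 2 := by omega
            have hfb : f = b - 2 := by omega
            rw [hp1', hr1'] at HC
            have he' : 2*a - 2 ≤ e := by linarith
            rcases eq_or_lt_of_le he' with he'' | he''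
            · exact h6 ⟨ha'2, he''.symm, hfb⟩
            · exact h5 ⟨ha'2, by omega⟩
          · have hp2 : p ≤ 2 := by omega
            have hr2 : r ≤ 2 := by omega
            have ha3' : a = 3 := by omega
            rw [ha3'] at HC he2
            have he5 : e = 5 := by omega
            have hp2' : p = 2 := by omega
            have hr2' : r = 2 := by omega
            rw [hp2'] at HA
            have t1 := hp1 hp; rw [hp2'] at t1
            have ha'2 : a' = 2 := by omega
            exact h5 ⟨ha'2, by omega⟩
        · have ha2' : a = 2 := by omega
          rw [ha2'] at HC he2 h4 h5 h6
          rcases le_or_gt 3 a' with ha'3 | ha'2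
          · have hq2p : 2*p + 1 ≤ q := step1' hp ha'3
            have hq3 : q ≤ 3 := by omega
            interval_cases q
            · omega
            · have hp1' : p = 1 := by omega
              have hr2' : r = 2 := by omega
              rw [hr2'] at HB
              have t2 := hr1 hr; rw [hr2'] at t2
              have hb2 : b = 2 := by omega
              exact h4 ⟨by omega, by omega⟩
          · have ha'2' : a' = 2 := by omega
            have he2' : e = 2 := by
              rcases lt_or_ge e 3 with h | h
              · omega
              · exact absurd ⟨ha'2', by omega⟩ h5
            have hfb3 : f ≤ b - 3 := by
              rcases lt_or_ge f (b-2) with h | h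
              · omega
              · exact absurd ⟨ha'2', by omega, by omega⟩ h6
            have hrq2 : r + 2 ≤ q := by
              have h1 := step2 hr
              have h2 : 1*(r-1) ≤ (b-1)*(r-1) :=
                mul_le_mul_of_nonneg_right (by linarith) (by linarith)
              have id1 : (b-1)*r = (b-1)*(r-1) + (b-1) := by ring
              linarith
            omega
  have hp0' : p = 0 := by
    by_contra h
    have := step1 (by omega); omega
  have hr0' : r = 0 := by
    by_contra h
    have := step2b (by omega); omega
  exact ⟨hq1, hp0', hr0'⟩
lemma seqLemma (v n : ℤ → ℤ) (j e f mlo Mhi : ℤ)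
    (hv : ∀ k, 2 ≤ v k)
    (hlo : ∀ k, k ≤ mlo → n k = 0) (hhi : ∀ k, Mhi ≤ k → n k = 0)
    (H : ∀ k, 0 ≤ (if k = j then e else if k = j+1 then f else 0)
            + n (k+1) + n (k-1) - v k * n k)
    (he1 : v j ≤ e) (he2 : e ≤ 2 * v j - 1) (hf0 : 0 ≤ f) (hf3 : f ≤ v (j+1) - 2)
    (h4 : ¬(e = 2 * v j - 1 ∧ f = v (j + 1) - 2))
    (h5 : ¬(v (j - 1) = 2 ∧ e = 2 * v j - 1))
    (h6 : ¬(v (j - 1) = 2 ∧ e = 2 * v j - 2 ∧ f = v (j + 1) - 2)) :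
    (∀ k, n k = 0) ∨ (n j = 1 ∧ ∀ k, k ≠ j → n k = 0) := by
  have Hg : ∀ k, k ≠ j → k ≠ j + 1 → 0 ≤ n (k+1) + n (k-1) - v k * n k := by
    intro k hk1 hk2
    have := H k
    rw [if_neg hk1, if_neg hk2] at this
    linarith
  -- right side: nonneg and nonincreasing
  have R1aux : ∀ i : ℕ, ∀ k, j + 1 ≤ k → Mhi - i ≤ k → 0 ≤ n k ∧ n (k+1) ≤ n k := by
    intro i
    induction i with
    | zero =>
      intro k hk1 hk2
      rw [hhi k (by omega), hhi (k+1) (by omega)]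
      exact ⟨le_rfl, le_rfl⟩
    | succ i ih =>
      intro k hk1 hk2
      rcases le_or_gt (Mhi - i) k with h | h
      · exact ih k hk1 h
      · have h1 := ih (k+1) (by omega) (by omega)
        have h2 := Hg (k+1) (by omega) (by omega)
        rw [show k+1-1 = k from by ring] at h2
        have h3 : 2 * n (k+1) ≤ v (k+1) * n (k+1) :=
          mul_le_mul_of_nonneg_right (hv _) h1.1
        exact ⟨by linarith [h1.2], by linarith [h1.2]⟩
  have R1 : ∀ k, j + 1 ≤ k → 0 ≤ n k ∧ n (k+1) ≤ n k := fun k hk =>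
    R1aux (Mhi - k).toNat k hk (by omega)
  -- left side: nonneg and nondecreasing (to the right)
  have L1aux : ∀ i : ℕ, ∀ k, k ≤ j - 1 → k ≤ mlo + i → 0 ≤ n k ∧ n (k-1) ≤ n k := by
    intro i
    induction i with
    | zero =>
      intro k hk1 hk2
      rw [hlo k (by omega), hlo (k-1) (by omega)]
      exact ⟨le_rfl, le_rfl⟩
    | succ i ih =>
      intro k hk1 hk2
      rcases le_or_gt k (mlo + i) with h | h
      · exact ih k hk1 h
      · have h1 := ih (k-1) (by omega) (by omega)
        have h2 := Hg (k-1) (by omega) (by omega)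
        rw [show k-1+1 = k from by ring] at h2
        have h3 : 2 * n (k-1) ≤ v (k-1) * n (k-1) :=
          mul_le_mul_of_nonneg_right (hv _) h1.1
        exact ⟨by linarith [h1.2], by linarith [h1.2]⟩
  have L1 : ∀ k, k ≤ j - 1 → 0 ≤ n k ∧ n (k-1) ≤ n k := fun k hk =>
    L1aux (k - mlo).toNat k hk (by omega)
  -- R2 : if n(j+1) ≤ n(j+2) and n(j+1) ≥ 1 then False
  have R2 : n (j+1) ≤ n (j+2) → 1 ≤ n (j+1) → False := by
    intro hmono hpos
    have claim : ∀ i : ℕ, ∀ k, j + 2 ≤ k → k ≤ j + 2 + i → n (j+1) ≤ n k ∧ n (k-1) ≤ n k := by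
      intro i
      induction i with
      | zero =>
        intro k hk1 hk2
        have hk : k = j + 2 := by omega
        subst hk
        exact ⟨hmono, by rw [show j+2-1 = j+1 from by ring]; exact hmono⟩
      | succ i ih =>
        intro k hk1 hk2
        rcases le_or_gt k (j + 2 + i) with h | h
        · exact ih k hk1 h
        · have h1 := ih (k-1) (by omega) (by omega)
          have h2 := Hg (k-1) (by omega) (by omega)
          rw [show k-1+1 = k from by ring] at h2
          have h0 : 0 ≤ n (k-1) := (R1 (k-1) (by omega)).1
          have h3 : 2 * n (k-1) ≤ v (k-1) * n (k-1) :=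
            mul_le_mul_of_nonneg_right (hv _) h0
          have h4 : n (k-1) ≤ n k := by linarith [h1.2]
          exact ⟨le_trans h1.1 h4, h4⟩
    set K := max Mhi (j + 2) with hK
    have h1 := (claim (K - (j+2)).toNat K (by omega) (by omega)).1
    rw [hhi K (by omega)] at h1
    omega
  -- L2 symmetric
  have L2 : n (j-1) ≤ n (j-2) → 1 ≤ n (j-1) → False := by
    intro hmono hpos
    have claim : ∀ i : ℕ, ∀ k, k ≤ j - 2 → j - 2 - i ≤ k → n (j-1) ≤ n k ∧ n k ≥ n (k+1) := by
      intro i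
      induction i with
      | zero =>
        intro k hk1 hk2
        have hk : k = j - 2 := by omega
        subst hk
        exact ⟨hmono, by rw [show j-2+1 = j-1 from by ring]; exact hmono⟩
      | succ i ih =>
        intro k hk1 hk2
        rcases le_or_gt (j - 2 - i) k with h | h
        · exact ih k hk1 h
        · have h1 := ih (k+1) (by omega) (by omega)
          have h2 := Hg (k+1) (by omega) (by omega)
          rw [show k+1-1 = k from by ring] at h2
          have h0 : 0 ≤ n (k+1) := (L1 (k+1) (by omega)).1
          have h3 : 2 * n (k+1) ≤ v (k+1) * n (k+1) :=
            mul_le_mul_of_nonneg_right (hv _) h0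
          have h4 : n (k+1) ≤ n k := by linarith [h1.2]
          exact ⟨le_trans h1.1 h4, by linarith [h1.2]⟩
    set K := min mlo (j - 2) with hK
    have h1 := (claim (j - 2 - K).toNat K (by omega) (by omega)).1
    rw [hlo K (by omega)] at h1
    omega
  -- gather data for central lemma
  have hp0 : 0 ≤ n (j-1) := (L1 (j-1) le_rfl).1
  have hp'0 : 0 ≤ n (j-2) := (L1 (j-2) (by omega)).1
  have hp' : n (j-2) ≤ n (j-1) := by
    have := (L1 (j-1) le_rfl).2
    rw [show j-1-1 = j-2 from by ring] at this
    exact this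
  have hr0 : 0 ≤ n (j+1) := (R1 (j+1) le_rfl).1
  have hr'0 : 0 ≤ n (j+2) := (R1 (j+2) (by omega)).1
  have hr' : n (j+2) ≤ n (j+1) := by
    have := (R1 (j+1) le_rfl).2
    rw [show j+1+1 = j+2 from by ring] at this
    exact this
  have hp1 : 1 ≤ n (j-1) → n (j-2) ≤ n (j-1) - 1 := by
    intro hp
    by_contra hcon
    exact L2 (by omega) hp
  have hr1 : 1 ≤ n (j+1) → n (j+2) ≤ n (j+1) - 1 := by
    intro hr
    by_contra hcon
    exact R2 (by omega) hr
  have HA : v (j-1) * n (j-1) ≤ n (j-2) + n j := by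
    have h2 := Hg (j-1) (by omega) (by omega)
    rw [show j-1+1 = j from by ring, show j-1-1 = j-2 from by ring] at h2
    linarith
  have HB : v (j+1) * n (j+1) - f ≤ n j + n (j+2) := by
    have := H (j+1)
    rw [if_neg (by omega), if_pos rfl, show j+1+1 = j+2 from by ring,
      show j+1-1 = j from by ring] at this
    linarith
  have HC : v j * n j ≤ n (j-1) + n (j+1) + e := by
    have := H j
    rw [if_pos rfl, show j-1 = j-1 from rfl] at this
    linarith
  have hq0 : 0 ≤ n j := by
    have h3 : 2 * n (j-1) ≤ v (j-1) * n (j-1) :=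
      mul_le_mul_of_nonneg_right (hv _) hp0
    linarith
  obtain ⟨hq1, hpz, hrz⟩ :=
    central (v (j-1)) (v j) (v (j+1)) e f (n (j-1)) (n j) (n (j+1)) (n (j-2)) (n (j+2))
      (hv _) (hv _) (hv _) he1 he2 hf0 hf3 h4 h5 h6
      hp0 hr0 hp'0 hr'0 hp' hr' hp1 hr1 hq0
      HA HB HC
  -- all k > j are zero
  have Rz : ∀ k, j + 1 ≤ k → n k = 0 := by
    have aux : ∀ i : ℕ, ∀ k, j + 1 ≤ k → k ≤ j + 1 + i → n k = 0 := by
      intro i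
      induction i with
      | zero =>
        intro k hk1 hk2
        have hk : k = j+1 := by omega
        rw [hk]; exact hrz
      | succ i ih =>
        intro k hk1 hk2
        rcases le_or_gt k (j + 1 + i) with h | h
        · exact ih k hk1 h
        · have h1 := ih (k-1) (by omega) (by omega)
          have h2 := (R1 (k-1) (by omega)).2
          rw [show k-1+1 = k from by ring, h1] at h2
          have h0 := (R1 k (by omega)).1
          omega
    intro k hk
    exact aux (k - (j+1)).toNat k hk (by omega)
  have Lz : ∀ k, k ≤ j - 1 → n k = 0 := by
    have aux : ∀ i : ℕ, ∀ k, k ≤ j - 1 → j - 1 - i ≤ k → n k = 0 := by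
      intro i
      induction i with
      | zero =>
        intro k hk1 hk2
        have hk : k = j-1 := by omega
        rw [hk]; exact hpz
      | succ i ih =>
        intro k hk1 hk2
        rcases le_or_gt (j - 1 - i) k with h | h
        · exact ih k hk1 h
        · have h1 := ih (k+1) (by omega) (by omega)
          have h2 := (L1 (k+1) (by omega)).2
          rw [show k+1-1 = k from by ring, h1] at h2
          have h0 := (L1 k (by omega)).1
          omega
    intro k hk
    exact aux (j - 1 - k).toNat k hk (by omega)
  rcases eq_or_lt_of_le hq1 with hq | hq
  · right
    refine ⟨hq, ?_⟩
    intro k hk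
    rcases lt_trichotomy k j with h | h | h
    · exact Lz k (by omega)
    · exact absurd h hk
    · exact Rz k (by omega)
  · left
    intro k
    rcases lt_trichotomy k j with h | h | h
    · exact Lz k (by omega)
    · rw [h]; omega
    · exact Rz k (by omega)

section Char
variable {D : ℕ} {β : ℤ → OK} {v : ℤ → ℤ}

lemma partition_char (hβ : BetaSeq D β v)
    (j e f : ℤ) (he : 1 ≤ e) (hf : 0 ≤ f)
    (α : OK) (hα : α = e • β j + f • β (j + 1))
    (h1 : v j ≤ e) (h2 : e ≤ 2 * v j - 1) (h3 : f ≤ v (j + 1) - 2)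
    (h4 : ¬(e = 2 * v j - 1 ∧ f = v (j + 1) - 2))
    (h5 : ¬(v (j - 1) = 2 ∧ e = 2 * v j - 1))
    (h6 : ¬(v (j - 1) = 2 ∧ e = 2 * v j - 2 ∧ f = v (j + 1) - 2))
    (s : Multiset OK) (hind : ∀ x ∈ s, Indec D x) (hsum : s.sum = α) :
    s = Multiset.replicate e.toNat (β j) + Multiset.replicate f.toNat (β (j + 1)) ∨
    s = {β (j - 1)} + Multiset.replicate (e - v j).toNat (β j) +
          Multiset.replicate (f + 1).toNat (β (j + 1)) := by
  obtain ⟨t, ht⟩ := exists_indexMultiset hβ s hind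
  -- bound the indices
  set C : ℝ := max (emb1 D α) (emb2 D α) with hC
  obtain ⟨N, hN⟩ := b_unbounded hβ C
  set lo : ℤ := min (min (-(N:ℤ) - 1) (j - 1)) 0 with hlo
  set hi : ℤ := max (max ((N:ℤ) + 1) (j + 2)) 0 with hhi
  have hloj : lo ≤ j - 1 := by omega
  have hhij : j + 2 ≤ hi := by omega
  have hlohi : lo ≤ hi := by omega
  set I : Finset ℤ := Finset.Icc lo hi with hI
  have htk : ∀ k ∈ t, k ∈ I := by
    intro k hk
    have hks : β k ∈ s := ht ▸ Multiset.mem_map_of_mem β hk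
    have hb := mem_bound D s α (β k) (fun y hy => (hind y hy).1) hsum hks
    have hub : k ≤ (N:ℤ) := by
      by_contra hcon
      push_neg at hcon
      have := hN k (by omega)
      have : C < emb1 D α := lt_of_lt_of_le this hb.1
      simp only [hC] at this
      have := le_max_left (emb1 D α) (emb2 D α)
      linarith
    have hlb : -(N:ℤ) ≤ k := by
      by_contra hcon
      push_neg at hcon
      have h2' := hN (-k) (by omega)
      rw [← emb2_beta hβ] at h2'
      have : C < emb2 D α := lt_of_lt_of_le h2' hb.2
      simp only [hC] at this
      have := le_max_right (emb1 D α) (emb2 D α)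
      linarith
    simp only [hI, Finset.mem_Icc]
    omega
  have hjI : j ∈ I := by simp only [hI, Finset.mem_Icc]; omega
  have hj1I : j + 1 ∈ I := by simp only [hI, Finset.mem_Icc]; omega
  -- coefficient functions
  set cstar : ℤ → ℤ := fun k => if k = j then e else if k = j+1 then f else 0 with hcstar
  set c : ℤ → ℤ := fun k => (t.count k : ℤ) with hc
  set d : ℤ → ℤ := fun k => c k - cstar k with hd
  have hsum1 : α = ∑ k ∈ I, c k • β k := by
    rw [← hsum, ht]
    exact map_sum_eq_count_sum β t I htk
  have hsum2 : α = ∑ k ∈ I, cstar k • β k := by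
    rw [hα, cstar_sum β I j e f hjI hj1I]
  have hcnt0 : ∀ k, k ∉ I → c k = 0 := by
    intro k hk
    simp only [hc]
    rw [Multiset.count_eq_zero_of_notMem (fun hmem => hk (htk k hmem))]
    rfl
  have hd0 : ∀ k, k < lo → d k = 0 := by
    intro k hk
    have h1' : c k = 0 := hcnt0 k (by simp only [hI, Finset.mem_Icc]; omega)
    have h2' : cstar k = 0 := by
      simp only [hcstar]
      rw [if_neg (by omega), if_neg (by omega)]
    simp only [hd, h1', h2', sub_zero]
  have hdhi : ∀ k, hi < k → d k = 0 := by
    intro k hk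
    have h1' : c k = 0 := hcnt0 k (by simp only [hI, Finset.mem_Icc]; omega)
    have h2' : cstar k = 0 := by
      simp only [hcstar]
      rw [if_neg (by omega), if_neg (by omega)]
    simp only [hd, h1', h2', sub_zero]
  have hzero : ∀ K, hi ≤ K → ∑ k ∈ Finset.Icc lo K, d k • β k = 0 := by
    intro K hK
    have h0 : ∑ k ∈ I, d k • β k = 0 := by
      have hcong : ∀ k ∈ I, d k • β k = c k • β k - cstar k • β k := by
        intro k _
        simp only [hd, sub_smul]
      rw [Finset.sum_congr rfl hcong, Finset.sum_sub_distrib, ← hsum1, ← hsum2, sub_self]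
    have hss : I ⊆ Finset.Icc lo K := by
      simp only [hI]
      exact Finset.Icc_subset_Icc_right hK
    have hz : ∀ x ∈ Finset.Icc lo K, x ∉ I → d x • β x = 0 := by
      intro x hx hxI
      simp only [Finset.mem_Icc] at hx
      simp only [hI, Finset.mem_Icc] at hxI
      rw [hdhi x (by omega), zero_smul]
    rw [← Finset.sum_subset hss hz]
    exact h0
  set n : ℤ → ℤ := nfun v d lo with hn
  have hnlo : ∀ k, k ≤ lo → n k = 0 := fun k hk => nfun_zero_below v d lo k hk
  have hnhi : ∀ K, hi ≤ K → n K = 0 := by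
    intro K hK
    have htel := telescope hβ d lo hd0 K (by omega)
    rw [hzero K hK] at htel
    have heq : n (K+1) • β K = n K • β (K+1) := by
      have := htel.symm
      rw [sub_eq_zero] at this
      exact this
    exact (ratio_lemma hβ K (n (K+1)) (n K) heq).2
  have hdn : ∀ k, d k = n (k+1) - v k * n k + n (k-1) := nfun_d_eq v d lo hd0
  have hH : ∀ k, 0 ≤ (if k = j then e else if k = j+1 then f else 0)
      + n (k+1) + n (k-1) - v k * n k := by
    intro k
    have hc0 : 0 ≤ c k := by simp only [hc]; positivity
    have := hdn k
    have hck : c k = cstar k + d k := by simp only [hd]; ring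
    simp only [hcstar] at hck
    omega
  have hseq := seqLemma v n j e f lo hi (hβ.v_two_le) hnlo hnhi hH
      h1 h2 hf h3 h4 h5 h6
  rcases hseq with hcase | hcase
  · -- n = 0 : counts equal cstar
    left
    have hdz : ∀ k, d k = 0 := by
      intro k
      rw [hdn k, hcase (k+1), hcase k, hcase (k-1)]
      ring
    have hcnt : ∀ k, (t.count k : ℤ) = cstar k := by
      intro k
      have := hdz k
      simp only [hd, hc] at this
      omega
    have ht1 : t = Multiset.replicate e.toNat j + Multiset.replicate f.toNat (j+1) := by
      ext a
      rw [Multiset.count_add, Multiset.count_replicate, Multiset.count_replicate]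
      have hca := hcnt a
      simp only [hcstar] at hca
      split_ifs at hca ⊢ <;> omega
    rw [ht, ht1, Multiset.map_add, Multiset.map_replicate, Multiset.map_replicate]
  · -- n = δ_j
    right
    obtain ⟨hnj, hnother⟩ := hcase
    have hcnt : ∀ k, (t.count k : ℤ) =
        (if k = j - 1 then 1 else if k = j then e - v j else if k = j+1 then f + 1 else 0) := by
      intro k
      have hdk := hdn k
      have hck : (t.count k : ℤ) = cstar k + d k := by simp only [hd, hc]; ring
      simp only [hcstar] at hck
      by_cases hk1 : k = j - 1
      · subst hk1
        rw [show j - 1 + 1 = j from by ring, hnj, hnother (j-1) (by omega),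
          hnother (j-1-1) (by omega), mul_zero] at hdk
        split_ifs at hck ⊢ <;> omega
      · by_cases hk2 : k = j
        · rw [hk2] at hdk hck ⊢
          rw [hnj, hnother (j+1) (by omega), hnother (j-1) (by omega), mul_one] at hdk
          split_ifs at hck ⊢ <;> omega
        · by_cases hk3 : k = j + 1
          · subst hk3
            rw [show j + 1 - 1 = j from by ring, hnj, hnother (j+1+1) (by omega),
              hnother (j+1) (by omega), mul_zero] at hdk
            split_ifs at hck ⊢ <;> omega
          · rw [hnother (k+1) (by omega), hnother k (by omega),
              hnother (k-1) (by omega), mul_zero] at hdk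
            split_ifs at hck ⊢ <;> omega
    have ht2 : t = {j - 1} + Multiset.replicate (e - v j).toNat j
        + Multiset.replicate (f + 1).toNat (j+1) := by
      ext a
      rw [Multiset.count_add, Multiset.count_add, Multiset.count_singleton,
        Multiset.count_replicate, Multiset.count_replicate]
      have hca := hcnt a
      split_ifs at hca ⊢ <;> omega
    rw [ht, ht2, Multiset.map_add, Multiset.map_add, Multiset.map_singleton,
      Multiset.map_replicate, Multiset.map_replicate]

end Char

lemma toNat_smul (x : OK) (z : ℤ) (h : 0 ≤ z) : z.toNat • x = z • x := by
  rw [← natCast_zsmul, Int.toNat_of_nonneg h]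

/-- under condition (1) of Theorem `thm:D2`, `α` has exactly two
partitions into indecomposable parts, explicitly listed. -/
theorem stmt10 (D : ℕ) (hD : 2 ≤ D) (hsq : Squarefree D)
    (β : ℤ → OK) (v : ℤ → ℤ) (hβ : BetaSeq D β v)
    (j e f : ℤ) (he : 1 ≤ e) (hf : 0 ≤ f)
    (α : OK) (hα : α = e • β j + f • β (j + 1))
    (h1 : v j ≤ e) (h2 : e ≤ 2 * v j - 1) (h3 : f ≤ v (j + 1) - 2)
    (h4 : ¬(e = 2 * v j - 1 ∧ f = v (j + 1) - 2))
    (h5 : ¬(v (j - 1) = 2 ∧ e = 2 * v j - 1))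
    (h6 : ¬(v (j - 1) = 2 ∧ e = 2 * v j - 2 ∧ f = v (j + 1) - 2)) :
    pKI D α = 2 ∧
      {s : Multiset OK | (∀ x ∈ s, Indec D x) ∧ s.sum = α} =
        {Multiset.replicate e.toNat (β j) + Multiset.replicate f.toNat (β (j + 1)),
         {β (j - 1)} + Multiset.replicate (e - v j).toNat (β j) +
           Multiset.replicate (f + 1).toNat (β (j + 1))} := by
  set s1 : Multiset OK :=
    Multiset.replicate e.toNat (β j) + Multiset.replicate f.toNat (β (j + 1)) with hs1
  set s2 : Multiset OK := {β (j - 1)} + Multiset.replicate (e - v j).toNat (β j) +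
    Multiset.replicate (f + 1).toNat (β (j + 1)) with hs2
  -- membership of s1
  have hmem1 : (∀ x ∈ s1, Indec D x) ∧ s1.sum = α := by
    constructor
    · intro x hx
      rcases Multiset.mem_add.mp hx with hx | hx
      · rw [Multiset.eq_of_mem_replicate hx]; exact hβ.indec j
      · rw [Multiset.eq_of_mem_replicate hx]; exact hβ.indec (j+1)
    · rw [hs1, Multiset.sum_add, Multiset.sum_replicate, Multiset.sum_replicate,
        toNat_smul _ e (by omega), toNat_smul _ f hf, hα]
  have hmem2 : (∀ x ∈ s2, Indec D x) ∧ s2.sum = α := by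
    constructor
    · intro x hx
      rcases Multiset.mem_add.mp hx with hx | hx
      · rcases Multiset.mem_add.mp hx with hx | hx
        · rw [Multiset.mem_singleton.mp hx]; exact hβ.indec (j-1)
        · rw [Multiset.eq_of_mem_replicate hx]; exact hβ.indec j
      · rw [Multiset.eq_of_mem_replicate hx]; exact hβ.indec (j+1)
    · rw [hs2, Multiset.sum_add, Multiset.sum_add, Multiset.sum_singleton,
        Multiset.sum_replicate, Multiset.sum_replicate,
        toNat_smul _ (e - v j) (by omega), toNat_smul _ (f + 1) (by omega), hα]
      have hrel : v j • β j = β (j-1) + β (j+1) := hβ.rel j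
      rw [sub_smul, add_smul, one_smul]
      rw [hrel]
      abel
  -- s1 ≠ s2
  have hne1 : β j ≠ β (j - 1) := fun hh => by have := beta_inj hβ hh; omega
  have hne2 : β (j+1) ≠ β (j - 1) := fun hh => by have := beta_inj hβ hh; omega
  have hcount1 : s1.count (β (j-1)) = 0 := by
    simp [hs1, Multiset.count_replicate, hne1, hne2, Ne.symm hne1, Ne.symm hne2]
  have hcount2 : 1 ≤ s2.count (β (j-1)) := by
    rw [hs2, Multiset.count_add, Multiset.count_add, Multiset.count_singleton, if_pos rfl]
    omega
  have hne : s1 ≠ s2 := by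
    intro h
    rw [h] at hcount1
    omega
  have hset : {s : Multiset OK | (∀ x ∈ s, Indec D x) ∧ s.sum = α} = {s1, s2} := by
    ext s
    constructor
    · rintro ⟨hind, hsum⟩
      rcases partition_char hβ j e f he hf α hα h1 h2 h3 h4 h5 h6 s hind hsum with h | h
      · exact Or.inl h
      · exact Or.inr h
    · rintro (rfl | rfl)
      · exact hmem1
      · exact hmem2
  refine ⟨?_, hset⟩
  rw [pKI, hset]
  exact Set.ncard_pair hne
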